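/- arXiv:1710.06468 — 3 statements merged into one kernel-verified Lean document; each statement's English description precedes it below -/
import Mathlib

section
/- If a degree-2 linear operator L defines a Lefschetz operation on a finite-dimensional graded vector space W (i.e. L^p : W^{-p} → W^p is an isomorphism for all p > 0) and a degree-2 operator l defines a Lefschetz operation on a finite-dimensional graded vector space H, then the operator l⊗1 + 1⊗L defines a Lefschetz operation on the tensor product W ⊗ H with the total grading. -/
/-!
STATEMENT 0: If a degree-2 operator `L` defines a Lefschetz operation on a
finite-dimensional graded real vector space `W` and a degree-2 operator `l`
defines a Lefschetz operation on a finite-dimensional graded real vector space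
`H`, then `l ⊗ 1 + 1 ⊗ L` (equivalently `L ⊗ 1 + 1 ⊗ l` on `W ⊗ H`) defines a
Lefschetz operation on `W ⊗ H` with the total grading.
-/

open Module TensorProduct

/-- `L` is a degree-2 operator with respect to the grading `g`. -/
def IsDeg2 {M : Type} [AddCommGroup M] [Module ℝ M]
    (g : ℤ → Submodule ℝ M) (L : Module.End ℝ M) : Prop :=
  ∀ i : ℤ, ∀ x ∈ g i, L x ∈ g (i + 2)

/-- `L` defines a Lefschetz operation: `L^p : M^{-p} → M^p` is an isomorphism
for every `p > 0`. -/
def IsLefschetz {M : Type} [AddCommGroup M] [Module ℝ M]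
    (g : ℤ → Submodule ℝ M) (L : Module.End ℝ M) : Prop :=
  ∀ p : ℕ, 0 < p →
    (∀ x ∈ g (-(p : ℤ)), (L ^ p) x ∈ g (p : ℤ)) ∧
    ∀ hmap : ∀ x ∈ g (-(p : ℤ)), (L ^ p) x ∈ g (p : ℤ),
      Function.Bijective ((L ^ p).restrict hmap)

/-- The total grading on a tensor product: `(W ⊗ H)^k = ⊕_{i+j=k} W^i ⊗ H^j`. -/
noncomputable def tgrade {W H : Type} [AddCommGroup W] [Module ℝ W]
    [AddCommGroup H] [Module ℝ H]
    (gW : ℤ → Submodule ℝ W) (gH : ℤ → Submodule ℝ H) (k : ℤ) :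
    Submodule ℝ (W ⊗[ℝ] H) :=
  ⨆ p : {q : ℤ × ℤ // q.1 + q.2 = k},
    Submodule.map₂ (TensorProduct.mk ℝ W H) (gW p.1.1) (gH p.1.2)

set_option linter.unusedSectionVars false
set_option maxHeartbeats 1000000

section B
variable {V : Type} [AddCommGroup V] [Module ℝ V]

lemma pow_deg (g : ℤ → Submodule ℝ V) (e : Module.End ℝ V)
    (he : ∀ m : ℤ, ∀ x ∈ g m, e x ∈ g (m + 2)) :
    ∀ (n : ℕ) (m : ℤ), ∀ x ∈ g m, (e ^ n) x ∈ g (m + 2 * n) := by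
  intro n
  induction n with
  | zero => intro m x hx; simpa using hx
  | succ n ih =>
    intro m x hx
    have h1 : (e ^ (n + 1)) x = (e ^ n) (e x) := by
      rw [pow_succ]; rfl
    rw [h1]
    have := ih (m + 2) (e x) (he m x hx)
    convert this using 2
    push_cast; ring

lemma pow_deg_neg (g : ℤ → Submodule ℝ V) (f : Module.End ℝ V)
    (hf : ∀ m : ℤ, ∀ x ∈ g m, f x ∈ g (m - 2)) :
    ∀ (n : ℕ) (m : ℤ), ∀ x ∈ g m, (f ^ n) x ∈ g (m - 2 * n) := by
  intro n
  induction n with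
  | zero => intro m x hx; simpa using hx
  | succ n ih =>
    intro m x hx
    have h1 : (f ^ (n + 1)) x = (f ^ n) (f x) := by
      rw [pow_succ]; rfl
    rw [h1]
    have := ih (m - 2) (f x) (hf m x hx)
    convert this using 2
    push_cast; ring

lemma sl2_pow_comm (g : ℤ → Submodule ℝ V) (e f : Module.End ℝ V)
    (he : ∀ m : ℤ, ∀ x ∈ g m, e x ∈ g (m + 2))
    (hrel : ∀ m : ℤ, ∀ x ∈ g m, e (f x) - f (e x) = (m : ℝ) • x) :
    ∀ (n : ℕ) (m : ℤ), ∀ x ∈ g m,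
      (e ^ (n + 1)) (f x) = f ((e ^ (n + 1)) x)
        + (((n : ℝ) + 1) * ((m : ℝ) + (n : ℝ))) • ((e ^ n) x) := by
  intro n
  induction n with
  | zero =>
    intro m x hx
    have := hrel m x hx
    have h2 : e (f x) = f (e x) + (m : ℝ) • x := by
      linear_combination (norm := module) this
    simpa using h2
  | succ n ih =>
    intro m x hx
    have hy : (e ^ (n + 1)) x ∈ g (m + 2 * (n + 1)) := pow_deg g e he (n + 1) m x hx
    have h1 : (e ^ (n + 1 + 1)) (f x) = e ((e ^ (n + 1)) (f x)) := by
      rw [pow_succ']; rfl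
    have h2 : (e ^ (n + 1 + 1)) x = e ((e ^ (n + 1)) x) := by
      rw [pow_succ']; rfl
    have h3 : (e ^ (n + 1)) x = e ((e ^ n) x) := by
      rw [pow_succ']; rfl
    have hr := hrel (m + 2 * (n + 1)) _ hy
    rw [h1, ih m x hx]
    rw [map_add, map_smul]
    have hr' : e (f ((e ^ (n + 1)) x)) =
        f (e ((e ^ (n + 1)) x)) + ((m : ℝ) + 2 * ((n : ℝ) + 1)) • ((e ^ (n + 1)) x) := by
      have : ((m + 2 * ((n : ℤ) + 1) : ℤ) : ℝ) = (m : ℝ) + 2 * ((n : ℝ) + 1) := by push_cast; ring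
      rw [← this]
      linear_combination (norm := module) hr
    rw [hr', ← h2, ← h3]
    push_cast
    module

lemma lemB (g : ℤ → Submodule ℝ V) (e f : Module.End ℝ V)
    (he : ∀ m : ℤ, ∀ x ∈ g m, e x ∈ g (m + 2))
    (hf : ∀ m : ℤ, ∀ x ∈ g m, f x ∈ g (m - 2))
    (hrel : ∀ m : ℤ, ∀ x ∈ g m, e (f x) - f (e x) = (m : ℝ) • x)
    (N : ℕ) (hN : ∀ m : ℤ, m ≤ -(N : ℤ) → g m = ⊥) :
    ∀ p : ℕ, 0 < p → ∀ x ∈ g (-(p : ℤ)), (e ^ p) x = 0 → x = 0 := by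
  suffices hfuel : ∀ d : ℕ, ∀ p : ℕ, 0 < p → N ≤ p + d →
      ∀ x ∈ g (-(p : ℤ)), (e ^ p) x = 0 → x = 0 by
    intro p hp x hx hx0
    exact hfuel N p hp (Nat.le_add_left N p) x hx hx0
  intro d
  induction d with
  | zero =>
    intro p hp hNp x hx _
    have : g (-(p : ℤ)) = ⊥ := hN _ (by omega)
    rw [this] at hx
    simpa using hx
  | succ d ih =>
    intro p hp hNp x hx hx0
    -- step 1 : f x = 0
    have hfx : f x ∈ g (-((p + 2 : ℕ) : ℤ)) := by
      have := hf _ x hx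
      convert this using 2
      push_cast; ring
    have hep1 : (e ^ (p + 1)) x = 0 := by
      have : (e ^ (p + 1)) x = e ((e ^ p) x) := by rw [pow_succ']; rfl
      rw [this, hx0, map_zero]
    have hep2 : (e ^ (p + 2)) x = 0 := by
      have : (e ^ (p + 2)) x = e ((e ^ (p + 1)) x) := by rw [pow_succ']; rfl
      rw [this, hep1, map_zero]
    have hid := sl2_pow_comm g e f he hrel (p + 1) (-(p : ℤ)) x hx
    rw [hep2, map_zero, hep1] at hid
    have hfx0 : f x = 0 := by
      have h0 : (e ^ (p + 2)) (f x) = 0 := by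
        rw [show (p + 1 + 1) = p + 2 from rfl] at hid
        rw [hid]; simp
      exact ih (p + 2) (by omega) (by omega) (f x) hfx h0
    -- step 2 : e^(p-1) x = 0
    obtain ⟨n, rfl⟩ : ∃ n, p = n + 1 := ⟨p - 1, by omega⟩
    have hen : (e ^ n) x = 0 := by
      have hid2 := sl2_pow_comm g e f he hrel n (-((n : ℤ) + 1)) x (by exact_mod_cast hx)
      rw [hfx0, map_zero, hx0, map_zero] at hid2
      have hc : ((n : ℝ) + 1) * ((-((n : ℝ) + 1)) + n) ≠ 0 := by
        have h1 : (0:ℝ) < (n : ℝ) + 1 := by positivity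
        have : ((-((n : ℝ) + 1)) + n) = -1 := by ring
        rw [this]; intro hcon; nlinarith
      have : (((n : ℝ) + 1) * (((-((n : ℤ) + 1) : ℤ) : ℝ) + n)) • ((e ^ n) x) = 0 := by
        linear_combination (norm := module) hid2.symm
      have hcast : (((-((n : ℤ) + 1) : ℤ)) : ℝ) = -((n : ℝ) + 1) := by push_cast; ring
      rw [hcast] at this
      exact (smul_eq_zero.mp this).resolve_left hc
    -- descent
    have hstep : ∀ j : ℕ, j + 1 ≤ n → (e ^ (j + 1)) x = 0 → (e ^ j) x = 0 := by
      intro j hj hj0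
      have hid3 := sl2_pow_comm g e f he hrel j (-((n : ℤ) + 1)) x (by exact_mod_cast hx)
      rw [hfx0, map_zero, hj0, map_zero] at hid3
      have hc : ((j : ℝ) + 1) * ((-((n : ℝ) + 1)) + j) ≠ 0 := by
        have h1 : (0:ℝ) < (j : ℝ) + 1 := by positivity
        have h2 : (j : ℝ) < (n : ℝ) + 1 := by
          have : (j : ℝ) ≤ (n : ℝ) := by exact_mod_cast Nat.le_of_succ_le hj
          linarith
        intro hcon
        rcases mul_eq_zero.mp hcon with h | h
        · linarith
        · linarith
      have : (((j : ℝ) + 1) * (((-((n : ℤ) + 1) : ℤ) : ℝ) + j)) • ((e ^ j) x) = 0 := by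
        linear_combination (norm := module) hid3.symm
      have hcast : (((-((n : ℤ) + 1) : ℤ)) : ℝ) = -((n : ℝ) + 1) := by push_cast; ring
      rw [hcast] at this
      exact (smul_eq_zero.mp this).resolve_left hc
    have hdesc : ∀ k : ℕ, k ≤ n → (e ^ (n - k)) x = 0 := by
      intro k
      induction k with
      | zero => intro _; simpa using hen
      | succ k ihk =>
        intro hk
        have h1 : (e ^ (n - k)) x = 0 := ihk (by omega)
        have h2 : n - k = (n - (k + 1)) + 1 := by omega
        rw [h2] at h1
        have := hstep (n - (k + 1)) (by omega) h1
        exact this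
    have := hdesc n le_rfl
    simpa using this

end B

lemma grade_bound {V : Type} [AddCommGroup V] [Module ℝ V] [FiniteDimensional ℝ V]
    (g : ℤ → Submodule ℝ V) (hint : DirectSum.IsInternal g) :
    ∃ N : ℕ, ∀ m : ℤ, N < m.natAbs → g m = ⊥ := by
  classical
  have hfin : Set.Finite {i : ℤ | g i ≠ ⊥} :=
    Submodule.finite_ne_bot_of_iSupIndep hint.submodule_iSupIndep
  refine ⟨hfin.toFinset.sup (fun i => i.natAbs), ?_⟩
  intro m hm
  by_contra hne
  have hmT : m ∈ hfin.toFinset := hfin.mem_toFinset.mpr hne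
  have h2 : m.natAbs ≤ hfin.toFinset.sup (fun i => i.natAbs) := by
    simpa using Finset.le_sup (f := fun i : ℤ => i.natAbs) hmT
  omega

section A
variable {V : Type} [AddCommGroup V] [Module ℝ V] [FiniteDimensional ℝ V]

lemma trace_smulRight_eq (μ : V →ₗ[ℝ] ℝ) (x : V) :
    LinearMap.trace ℝ V (μ.smulRight x) = μ x := by
  classical
  let b := Module.finBasis ℝ V
  rw [LinearMap.trace_eq_matrix_trace ℝ b, Matrix.trace]
  have hdiag : ∀ i, (LinearMap.toMatrix b b (μ.smulRight x)).diag i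
      = μ (b i) * b.repr x i := by
    intro i
    simp [Matrix.diag, LinearMap.toMatrix_apply, map_smul, mul_comm]
  rw [Finset.sum_congr rfl fun i _ => hdiag i]
  conv_rhs => rw [← b.sum_repr x]
  rw [map_sum]
  congr 1
  ext i
  rw [map_smul]
  simp [mul_comm]

noncomputable def traceDual : Module.End ℝ V →ₗ[ℝ] Module.Dual ℝ (Module.End ℝ V) where
  toFun ψ := (LinearMap.trace ℝ V) ∘ₗ (LinearMap.mulRight ℝ ψ)
  map_add' ψ₁ ψ₂ := by ext φ; simp [LinearMap.mulRight_apply, mul_add]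
  map_smul' r ψ := by ext φ; simp [LinearMap.mulRight_apply, mul_smul_comm]

lemma traceDual_apply (ψ φ : Module.End ℝ V) :
    traceDual ψ φ = LinearMap.trace ℝ V (φ * ψ) := rfl

lemma traceDual_ker (ψ : Module.End ℝ V) (h : traceDual ψ = 0) : ψ = 0 := by
  by_contra hne
  obtain ⟨x, hx⟩ : ∃ x, ψ x ≠ 0 := by
    by_contra hall; push_neg at hall
    exact hne (by ext x; simp [hall x])
  obtain ⟨ϑ, hϑ⟩ : ∃ ϑ : Module.Dual ℝ V, ϑ (ψ x) ≠ 0 := by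
    by_contra hall; push_neg at hall
    exact hx ((Module.forall_dual_apply_eq_zero_iff ℝ (ψ x)).mp hall)
  have h1 : traceDual ψ ((ϑ.smulRight x)) = ϑ (ψ x) := by
    rw [traceDual_apply]
    have : (ϑ.smulRight x) * ψ = (ϑ ∘ₗ ψ).smulRight x := by
      ext v; simp [Module.End.mul_apply]
    rw [this, trace_smulRight_eq]; rfl
  rw [h] at h1
  simp at h1
  exact hϑ h1.symm

lemma traceDual_surjective :
    Function.Surjective (traceDual (V := V)) := by
  have hinj : Function.Injective (traceDual (V := V)) := by
    rw [injective_iff_map_eq_zero]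
    exact traceDual_ker
  have hfr : Module.finrank ℝ (Module.End ℝ V)
      = Module.finrank ℝ (Module.Dual ℝ (Module.End ℝ V)) :=
    (Subspace.dual_finrank_eq).symm
  exact (LinearMap.injective_iff_surjective_of_finrank_eq_finrank hfr).mp hinj

lemma ext_graded (g : ℤ → Submodule ℝ V) (hint : DirectSum.IsInternal g)
    {φ ψ : Module.End ℝ V} (h : ∀ m : ℤ, ∀ x ∈ g m, φ x = ψ x) : φ = ψ := by
  ext x
  have hx : x ∈ (⊤ : Submodule ℝ V) := trivial
  rw [← hint.submodule_iSup_eq_top] at hx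
  refine Submodule.iSup_induction (motive := fun y => φ y = ψ y) g hx ?_ (by simp) ?_
  · intro m x hxm; exact h m x hxm
  · intro a b ha hb; rw [map_add, map_add, ha, hb]

lemma lemA (g : ℤ → Submodule ℝ V) (hint : DirectSum.IsInternal g)
    (e : Module.End ℝ V) (hdeg : IsDeg2 g e) (hlef : IsLefschetz g e) :
    ∃ f : Module.End ℝ V, (∀ m : ℤ, ∀ x ∈ g m, f x ∈ g (m - 2)) ∧
      (∀ m : ℤ, ∀ x ∈ g m, e (f x) - f (e x) = (m : ℝ) • x) := by
  classical
  -- finitely many nonzero pieces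
  have hfin : Set.Finite {i : ℤ | g i ≠ ⊥} :=
    Submodule.finite_ne_bot_of_iSupIndep hint.submodule_iSupIndep
  set T : Finset ℤ := hfin.toFinset with hT
  set N : ℕ := T.sup (fun i => i.natAbs) with hNdef
  have hbot : ∀ m : ℤ, m ∉ Finset.Icc (-(N:ℤ)) (N:ℤ) → g m = ⊥ := by
    intro m hm
    by_contra hne
    have hmT : m ∈ T := hfin.mem_toFinset.mpr hne
    have h2 : m.natAbs ≤ N := by
      simpa using Finset.le_sup (f := fun i : ℤ => i.natAbs) hmT
    apply hm
    rw [Finset.mem_Icc]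
    omega
  set K : Finset ℤ := Finset.Icc (-(N:ℤ)) (N:ℤ) with hK
  have hbotK : ∀ m : ℤ, m ∉ K → g m = ⊥ := hbot
  -- the projections
  set D := LinearEquiv.ofBijective (DirectSum.coeLinearMap g) hint with hD
  set π : ℤ → Module.End ℝ V := fun k =>
    (g k).subtype ∘ₗ (DirectSum.component ℝ ℤ (fun i => g i) k) ∘ₗ D.symm.toLinearMap
    with hπ
  have hπapp : ∀ (k : ℤ) (x : V), π k x = ((D.symm x) k : V) := fun k x => rfl
  have hπmem : ∀ k x, π k x ∈ g k := by
    intro k x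
    rw [hπapp]
    exact Submodule.coe_mem _
  have hπsame : ∀ (m : ℤ) (x : V), x ∈ g m → π m x = x := by
    intro m x hx
    have h1 : (D.symm x) m = ⟨x, hx⟩ := by
      rw [hD]; exact hint.ofBijective_coeLinearMap_of_mem hx
    rw [hπapp, h1]
  have hπne : ∀ (m k : ℤ) (x : V), x ∈ g m → k ≠ m → π k x = 0 := by
    intro m k x hx hkm
    have h1 : (D.symm x) k = 0 := by
      rw [hD]; exact hint.ofBijective_coeLinearMap_of_mem_ne (Ne.symm hkm) hx
    rw [hπapp, h1]
    rfl
  have hπbotap : ∀ (m : ℤ) (x : V), m ∉ K → π m x = 0 := by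
    intro m x hm
    have h := hπmem m x
    rw [hbotK m hm] at h
    simpa using h
  -- decomposition of the identity
  have hone : ∀ x : V, (∑ k ∈ K, π k) x = x := by
    have : (∑ k ∈ K, π k) = (1 : Module.End ℝ V) := by
      apply ext_graded g hint
      intro m x hx
      rw [LinearMap.sum_apply]
      by_cases hm : m ∈ K
      · rw [Finset.sum_eq_single m (fun k _ hk => hπne m k x hx hk)
          (fun hmm => absurd hm hmm)]
        rw [hπsame m x hx]
        rfl
      · have : x = 0 := by
          have := hbotK m hm ▸ hx
          simpa using this
        subst this
        simp
    intro x
    rw [this]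
    rfl
  -- commutation of e with projections
  have hcomm1 : ∀ k : ℤ, e * π k = π (k + 2) * e := by
    intro k
    apply ext_graded g hint
    intro m x hx
    rw [Module.End.mul_apply, Module.End.mul_apply]
    by_cases hkm : k = m
    · subst hkm
      rw [hπsame k x hx, hπsame (k+2) (e x) (hdeg k x hx)]
    · rw [hπne m k x hx hkm, hπne (m+2) (k+2) (e x) (hdeg m x hx) (by omega), map_zero]
  -- projection multiplication
  have hππ_same : ∀ k : ℤ, π k * π k = π k := by
    intro k
    ext x
    rw [Module.End.mul_apply]
    exact hπsame k (π k x) (hπmem k x)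
  have hππ_ne : ∀ k j : ℤ, k ≠ j → π k * π j = 0 := by
    intro k j hkj
    ext x
    rw [Module.End.mul_apply]
    exact hπne j k (π j x) (hπmem j x) hkj
  -- the grading operator
  set HH : Module.End ℝ V := ∑ k ∈ K, (k : ℝ) • π k with hHH
  have hHx : ∀ (m : ℤ) (x : V), x ∈ g m → HH x = (m : ℝ) • x := by
    intro m x hx
    rw [hHH, LinearMap.sum_apply]
    by_cases hm : m ∈ K
    · rw [Finset.sum_eq_single m
        (fun k _ hk => by rw [LinearMap.smul_apply, hπne m k x hx hk, smul_zero])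
        (fun hmm => absurd hm hmm)]
      rw [LinearMap.smul_apply, hπsame m x hx]
    · have hx0 : x = 0 := by
        have := hbotK m hm ▸ hx
        simpa using this
      subst hx0
      simp
  -- Lefschetz partial inverses
  have hBex : ∀ k : ℕ, 0 < k → ∃ B : Module.End ℝ V,
      (∀ x ∈ g (-(k:ℤ)), B ((e ^ k) x) = x) ∧
      (∀ y ∈ g (k:ℤ), (e ^ k) (B y) = y) ∧
      (∀ x : V, B x ∈ g (-(k:ℤ))) ∧
      (∀ (m : ℤ) (y : V), y ∈ g m → m ≠ (k:ℤ) → B y = 0) := by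
    intro k hk
    have hmapk : ∀ x ∈ g (-(k:ℤ)), (e ^ k) x ∈ g (k:ℤ) := by
      intro x hx
      have := pow_deg g e hdeg k (-(k:ℤ)) x hx
      convert this using 2
      push_cast; ring
    have hbij := (hlef k hk).2 hmapk
    set Eqv := LinearEquiv.ofBijective ((e ^ k).restrict hmapk) hbij with hEq
    set B : Module.End ℝ V := (g (-(k:ℤ))).subtype ∘ₗ Eqv.symm.toLinearMap ∘ₗ
      ((DirectSum.component ℝ ℤ (fun i => g i) (k:ℤ)) ∘ₗ D.symm.toLinearMap) with hB
    have hBapp : ∀ x : V, B x = ((Eqv.symm ((D.symm x) (k:ℤ))) : V) := fun x => rfl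
    have hDcomp : ∀ (y : V) (hy : y ∈ g (k:ℤ)), (D.symm y) (k:ℤ) = ⟨y, hy⟩ := by
      intro y hy
      rw [hD]; exact hint.ofBijective_coeLinearMap_of_mem hy
    refine ⟨B, ?_, ?_, ?_, ?_⟩
    · intro x hx
      have hmem : (e ^ k) x ∈ g (k:ℤ) := hmapk x hx
      rw [hBapp, hDcomp _ hmem]
      have : Eqv ⟨x, hx⟩ = ⟨(e ^ k) x, hmem⟩ := by
        rw [hEq]
        rfl
      rw [← this, LinearEquiv.symm_apply_apply]
    · intro y hy
      rw [hBapp, hDcomp _ hy]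
      have : Eqv (Eqv.symm ⟨y, hy⟩) = ⟨y, hy⟩ := Eqv.apply_symm_apply _
      have h2 : ((e ^ k).restrict hmapk) (Eqv.symm ⟨y, hy⟩) = ⟨y, hy⟩ := this
      have h3 := congrArg (Subtype.val) h2
      exact h3
    · intro x
      rw [hBapp]
      exact Submodule.coe_mem _
    · intro m y hy hm
      have h1 : (D.symm y) (k:ℤ) = 0 := by
        rw [hD]
        exact hint.ofBijective_coeLinearMap_of_mem_ne hm hy
      rw [hBapp, h1, map_zero]
      rfl
  have hπ0 : ∀ k ∉ K, π k = 0 := by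
    intro k hk; ext x; exact hπbotap k x hk
  -- MAIN DUALITY STEP
  have hHrange : HH ∈ LinearMap.range
      ((LinearMap.mulLeft ℝ e) - (LinearMap.mulRight ℝ e)) := by
    set adE := (LinearMap.mulLeft ℝ e) - (LinearMap.mulRight ℝ e) with hadE
    set U := LinearMap.range adE with hU
    by_contra hHU
    have hq : U.mkQ HH ≠ 0 := by
      intro h
      rw [Submodule.mkQ_apply, Submodule.Quotient.mk_eq_zero] at h
      exact hHU h
    obtain ⟨ϑ, hϑ⟩ : ∃ ϑ : Module.Dual ℝ (Module.End ℝ V ⧸ U), ϑ (U.mkQ HH) ≠ 0 := by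
      by_contra hall; push_neg at hall
      exact hq ((Module.forall_dual_apply_eq_zero_iff ℝ _).mp hall)
    set Λ : Module.Dual ℝ (Module.End ℝ V) := ϑ ∘ₗ U.mkQ with hΛ
    have hΛU : ∀ u ∈ U, Λ u = 0 := by
      intro u hu
      have : U.mkQ u = 0 := by rw [Submodule.mkQ_apply, Submodule.Quotient.mk_eq_zero]; exact hu
      simp [hΛ, this]
    obtain ⟨ψ, hψ⟩ := traceDual_surjective Λ
    have htr : ∀ φ, LinearMap.trace ℝ V (φ * ψ) = Λ φ := by
      intro φ; rw [← hψ]; rfl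
    -- ψ commutes with e
    have hcomm : e * ψ = ψ * e := by
      have h0 : traceDual (ψ * e - e * ψ) = 0 := by
        apply LinearMap.ext
        intro φ
        rw [traceDual_apply]
        have hexp : φ * (ψ * e - e * ψ) = (φ * ψ) * e - (φ * e) * ψ := by
          rw [mul_sub]; rw [← mul_assoc, ← mul_assoc]
        rw [hexp, map_sub]
        rw [LinearMap.trace_mul_comm ℝ (φ * ψ) e, ← mul_assoc]
        have : LinearMap.trace ℝ V (e * φ * ψ) - LinearMap.trace ℝ V (φ * e * ψ)
            = Λ (e * φ) - Λ (φ * e) := by rw [htr, htr]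
        rw [this]
        have : Λ (e * φ) - Λ (φ * e) = Λ (e * φ - φ * e) := by rw [map_sub]
        rw [this]
        have hmem : e * φ - φ * e ∈ U := ⟨φ, rfl⟩
        simp [hΛU _ hmem]
      have := traceDual_ker _ h0
      have h2 : ψ * e = e * ψ := by
        have := sub_eq_zero.mp this
        exact this
      exact h2.symm
    -- degree zero part of ψ
    set ψ₀ : Module.End ℝ V := ∑ j ∈ K, π j * ψ * π j with hψ₀
    have hψ₀at : ∀ (m : ℤ) (y : V), y ∈ g m → ψ₀ y = π m (ψ y) := by
      intro m y hy
      by_cases hm : m ∈ K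
      · rw [hψ₀, LinearMap.sum_apply]
        rw [Finset.sum_eq_single m
          (fun j _ hj => by
            rw [Module.End.mul_apply, Module.End.mul_apply, hπne m j y hy hj,
              map_zero, map_zero])
          (fun hmm => absurd hm hmm)]
        rw [Module.End.mul_apply, Module.End.mul_apply, hπsame m y hy]
      · have hy0 : y = 0 := by
          have := hbotK m hm ▸ hy
          simpa using this
        subst hy0
        simp
    have hψ₀l : ∀ k ∈ K, ψ₀ * π k = π k * ψ * π k := by
      intro k hk
      rw [hψ₀, Finset.sum_mul]
      rw [Finset.sum_eq_single k
        (fun j _ hj => by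
          rw [mul_assoc (π j * ψ), hππ_ne j k hj, mul_zero])
        (fun hmm => absurd hk hmm)]
      rw [mul_assoc (π k * ψ), hππ_same]
    have hψ₀r : ∀ k ∈ K, π k * ψ₀ = π k * ψ * π k := by
      intro k hk
      rw [hψ₀, Finset.mul_sum]
      rw [Finset.sum_eq_single k
        (fun j _ hj => by
          rw [← mul_assoc, ← mul_assoc, hππ_ne k j (fun h => hj h.symm), zero_mul, zero_mul])
        (fun hmm => absurd hk hmm)]
      rw [← mul_assoc, ← mul_assoc, hππ_same, mul_assoc]
    have hψ₀e : e * ψ₀ = ψ₀ * e := by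
      apply ext_graded g hint
      intro m x hx
      rw [Module.End.mul_apply, Module.End.mul_apply]
      rw [hψ₀at m x hx, hψ₀at (m + 2) (e x) (hdeg m x hx)]
      have h1 : e (π m (ψ x)) = π (m + 2) (e (ψ x)) := by
        have := congrFun (congrArg (fun (t : Module.End ℝ V) => (t : V → V)) (hcomm1 m)) (ψ x)
        simpa [Module.End.mul_apply] using this
      rw [h1]
      have h2 : e (ψ x) = ψ (e x) := by
        have := congrFun (congrArg (fun (t : Module.End ℝ V) => (t : V → V)) hcomm) x
        simpa [Module.End.mul_apply] using this
      rw [h2]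
    have hcommpow : ∀ n : ℕ, e ^ n * ψ₀ = ψ₀ * e ^ n := by
      intro n
      have hc : Commute e ψ₀ := hψ₀e
      exact (hc.pow_left n)
    -- trace of HH * ψ via c
    set c : ℤ → ℝ := fun k => LinearMap.trace ℝ V (π k * ψ) with hc
    have hcψ₀ : ∀ j ∈ K, c j = LinearMap.trace ℝ V (ψ₀ * π j) := by
      intro j hj
      simp only [hc]
      have h1 : π j * ψ = π j * (π j * ψ) := by rw [← mul_assoc, hππ_same]
      rw [h1, LinearMap.trace_mul_comm ℝ (π j) (π j * ψ), ← hψ₀l j hj]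
    -- symmetry of c
    have hck : ∀ k : ℕ, 0 < k → c (-(k:ℤ)) = c (k:ℤ) := by
      intro k hk
      by_cases hkK : (k:ℤ) ∈ K
      · have hnkK : (-(k:ℤ)) ∈ K := by
          rw [hK, Finset.mem_Icc] at hkK ⊢; omega
        obtain ⟨B, hB1, hB2, hBmem, hB0⟩ := hBex k hk
        have hfact : π (-(k:ℤ)) = B * (e ^ k * π (-(k:ℤ))) := by
          apply ext_graded g hint
          intro m x hx
          by_cases hm : m = -(k:ℤ)
          · subst hm
            rw [hπsame _ x hx, Module.End.mul_apply, Module.End.mul_apply,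
              hπsame _ x hx, hB1 x hx]
          · rw [hπne m _ x hx (fun h => hm h.symm), Module.End.mul_apply, Module.End.mul_apply,
              hπne m _ x hx (fun h => hm h.symm), map_zero, map_zero]
        have hekB : e ^ k * B = π (k:ℤ) := by
          apply ext_graded g hint
          intro m y hy
          by_cases hm : m = (k:ℤ)
          · subst hm
            rw [Module.End.mul_apply, hB2 y hy, hπsame _ y hy]
          · rw [Module.End.mul_apply, hB0 m y hy hm, map_zero,
              hπne m _ y hy (fun h => hm h.symm)]
        have hπB : π (-(k:ℤ)) * B = B := by
          ext y
          exact hπsame _ (B y) (hBmem y)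
        have hmain : ψ₀ * π (-(k:ℤ)) = ψ₀ * π (-(k:ℤ)) := rfl
        rw [hcψ₀ _ hnkK, hcψ₀ _ hkK]
        calc LinearMap.trace ℝ V (ψ₀ * π (-(k:ℤ)))
            = LinearMap.trace ℝ V ((ψ₀ * B) * (e ^ k * π (-(k:ℤ)))) := by
              rw [mul_assoc, ← hfact]
          _ = LinearMap.trace ℝ V ((e ^ k * π (-(k:ℤ))) * (ψ₀ * B)) :=
              LinearMap.trace_mul_comm ℝ _ _
          _ = LinearMap.trace ℝ V (ψ₀ * π (k:ℤ)) := by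
              have s1 : π (-(k:ℤ)) * ψ₀ = ψ₀ * π (-(k:ℤ)) :=
                (hψ₀r _ hnkK).trans (hψ₀l _ hnkK).symm
              have hx : (e ^ k * π (-(k:ℤ))) * (ψ₀ * B) = ψ₀ * π (k:ℤ) := by
                calc (e ^ k * π (-(k:ℤ))) * (ψ₀ * B)
                    = e ^ k * ((π (-(k:ℤ)) * ψ₀) * B) := by
                      rw [mul_assoc, ← mul_assoc (π (-(k:ℤ)))]
                  _ = e ^ k * ((ψ₀ * π (-(k:ℤ))) * B) := by rw [s1]
                  _ = e ^ k * (ψ₀ * B) := by rw [mul_assoc ψ₀, hπB]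
                  _ = (e ^ k * ψ₀) * B := by rw [mul_assoc]
                  _ = (ψ₀ * e ^ k) * B := by rw [hcommpow k]
                  _ = ψ₀ * π (k:ℤ) := by rw [mul_assoc, hekB]
              rw [hx]
      · have hnkK : (-(k:ℤ)) ∉ K := by
          rw [hK, Finset.mem_Icc] at hkK ⊢; omega
        simp only [hc]
        simp only [hπ0 _ hkK, hπ0 _ hnkK, zero_mul, map_zero]
    have hcsym : ∀ k : ℤ, c (-k) = c k := by
      intro k
      rcases lt_trichotomy k 0 with h | h | h
      · have h1 := hck (-k).toNat (by omega)
        have h2 : (((-k).toNat : ℕ) : ℤ) = -k := Int.toNat_of_nonneg (by omega)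
        rw [h2] at h1
        rw [neg_neg] at h1
        exact h1.symm
      · subst h; simp
      · have h1 := hck k.toNat (by omega)
        have h2 : ((k.toNat : ℕ) : ℤ) = k := Int.toNat_of_nonneg (by omega)
        rw [h2] at h1
        exact h1
    -- conclude Λ HH = 0
    have hΛHH : Λ HH = 0 := by
      rw [← htr HH]
      have h1 : HH * ψ = ∑ k ∈ K, (k : ℝ) • (π k * ψ) := by
        rw [hHH, Finset.sum_mul]
        congr 1
      rw [h1, map_sum]
      have h2 : ∀ k ∈ K, LinearMap.trace ℝ V ((k : ℝ) • (π k * ψ)) = (k : ℝ) * c k := by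
        intro k _
        rw [map_smul, smul_eq_mul]
      rw [Finset.sum_congr rfl h2]
      have himg : K.image (fun k => -k) = K := by
        ext a
        simp only [Finset.mem_image, hK, Finset.mem_Icc]
        constructor
        · rintro ⟨b, hb, rfl⟩; omega
        · intro ha; exact ⟨-a, by omega, by omega⟩
      have h3 : ∑ k ∈ K, (k : ℝ) * c k = ∑ k ∈ K, ((-k : ℤ) : ℝ) * c (-k) := by
        conv_lhs => rw [← himg]
        rw [Finset.sum_image (by intro a _ b _ h; exact neg_injective h)]
      have h4 : ∑ k ∈ K, ((-k : ℤ) : ℝ) * c (-k) = - ∑ k ∈ K, (k : ℝ) * c k := by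
        rw [← Finset.sum_neg_distrib]
        congr 1
        ext1 k
        rw [hcsym k]
        push_cast
        ring
      have h5 := h3.trans h4
      linarith
    rw [hΛ] at hΛHH
    exact hϑ hΛHH
  -- extract the operator f
  obtain ⟨f', hf'⟩ := hHrange
  have hf'2 : e * f' - f' * e = HH := by
    have : ((LinearMap.mulLeft ℝ e) - (LinearMap.mulRight ℝ e)) f' = HH := hf'
    simpa [LinearMap.sub_apply, LinearMap.mulLeft_apply, LinearMap.mulRight_apply] using this
  set f : Module.End ℝ V := ∑ j ∈ K, π (j - 2) * f' * π j with hfdef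
  have hfat : ∀ (m : ℤ) (x : V), x ∈ g m → f x = π (m - 2) (f' x) := by
    intro m x hx
    by_cases hm : m ∈ K
    · rw [hfdef, LinearMap.sum_apply]
      rw [Finset.sum_eq_single m
        (fun j _ hj => by
          rw [Module.End.mul_apply, Module.End.mul_apply, hπne m j x hx hj,
            map_zero, map_zero])
        (fun hmm => absurd hm hmm)]
      rw [Module.End.mul_apply, Module.End.mul_apply, hπsame m x hx]
    · have hx0 : x = 0 := by
        have := hbotK m hm ▸ hx
        simpa using this
      subst hx0
      simp
  refine ⟨f, ?_, ?_⟩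
  · intro m x hx
    rw [hfat m x hx]
    exact hπmem _ _
  · intro m x hx
    rw [hfat m x hx]
    have hex : e x ∈ g (m + 2) := hdeg m x hx
    have hfe : f (e x) = π m (f' (e x)) := by
      rw [hfat (m + 2) (e x) hex]
      congr 2
      ring
    rw [hfe]
    have h1 : e (π (m - 2) (f' x)) = π m (e (f' x)) := by
      have := congrFun (congrArg (fun (t : Module.End ℝ V) => (t : V → V)) (hcomm1 (m - 2))) (f' x)
      simp only [Module.End.mul_apply] at this
      rw [this]
      congr 2
      ring
    rw [h1]
    have h2 : π m (e (f' x)) - π m (f' (e x)) = π m ((e * f' - f' * e) x) := by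
      rw [LinearMap.sub_apply, Module.End.mul_apply, Module.End.mul_apply, map_sub]
    rw [h2, hf'2, hHx m x hx, map_smul, hπsame m x hx]



end A

theorem stmt0 {W H : Type} [AddCommGroup W] [Module ℝ W] [FiniteDimensional ℝ W]
    [AddCommGroup H] [Module ℝ H] [FiniteDimensional ℝ H]
    (gW : ℤ → Submodule ℝ W) (gH : ℤ → Submodule ℝ H)
    (hWint : DirectSum.IsInternal gW) (hHint : DirectSum.IsInternal gH)
    (L : Module.End ℝ W) (l : Module.End ℝ H)
    (hLdeg : IsDeg2 gW L) (hldeg : IsDeg2 gH l)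
    (hL : IsLefschetz gW L) (hl : IsLefschetz gH l) :
    IsLefschetz (tgrade gW gH) (LinearMap.rTensor H L + LinearMap.lTensor W l) := by
  classical
  obtain ⟨fW, hfWdeg, hfWrel⟩ := lemA gW hWint L hLdeg hL
  obtain ⟨fH, hfHdeg, hfHrel⟩ := lemA gH hHint l hldeg hl
  set E : Module.End ℝ (W ⊗[ℝ] H) := LinearMap.rTensor H L + LinearMap.lTensor W l with hE
  set F : Module.End ℝ (W ⊗[ℝ] H) := LinearMap.rTensor H fW + LinearMap.lTensor W fH with hF
  set G : ℤ → Submodule ℝ (W ⊗[ℝ] H) := tgrade gW gH with hG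
  have hmem : ∀ (i j : ℤ) (w : W) (h : H), w ∈ gW i → h ∈ gH j →
      w ⊗ₜ[ℝ] h ∈ G (i + j) := by
    intro i j w h hw hh
    refine Submodule.mem_iSup_of_mem (⟨(i, j), rfl⟩ : {q : ℤ × ℤ // q.1 + q.2 = i + j}) ?_
    exact Submodule.apply_mem_map₂ _ hw hh
  have hle : ∀ (k : ℤ) (q : Submodule ℝ (W ⊗[ℝ] H)),
      (∀ (i j : ℤ) (w : W) (h : H), i + j = k → w ∈ gW i → h ∈ gH j → w ⊗ₜ[ℝ] h ∈ q) →
      G k ≤ q := by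
    intro k q hq
    refine iSup_le ?_
    rintro ⟨⟨i, j⟩, hij⟩
    rw [Submodule.map₂_le]
    intro w hw h hh
    exact hq i j w h hij hw hh
  -- degrees
  have hEdeg : ∀ (m : ℤ), ∀ x ∈ G m, E x ∈ G (m + 2) := by
    intro m x hx
    refine hle m (Submodule.comap E (G (m + 2))) ?_ hx
    intro i j w h hij hw hh
    rw [Submodule.mem_comap, hE]
    simp only [LinearMap.add_apply, LinearMap.rTensor_tmul, LinearMap.lTensor_tmul]
    refine Submodule.add_mem _ ?_ ?_
    · have := hmem (i + 2) j (L w) h (hLdeg i w hw) hh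
      have hidx : i + 2 + j = m + 2 := by omega
      rwa [hidx] at this
    · have := hmem i (j + 2) w (l h) hw (hldeg j h hh)
      have hidx : i + (j + 2) = m + 2 := by omega
      rwa [hidx] at this
  have hFdeg : ∀ (m : ℤ), ∀ x ∈ G m, F x ∈ G (m - 2) := by
    intro m x hx
    refine hle m (Submodule.comap F (G (m - 2))) ?_ hx
    intro i j w h hij hw hh
    rw [Submodule.mem_comap, hF]
    simp only [LinearMap.add_apply, LinearMap.rTensor_tmul, LinearMap.lTensor_tmul]
    refine Submodule.add_mem _ ?_ ?_
    · have := hmem (i - 2) j (fW w) h (hfWdeg i w hw) hh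
      have hidx : i - 2 + j = m - 2 := by omega
      rwa [hidx] at this
    · have := hmem i (j - 2) w (fH h) hw (hfHdeg j h hh)
      have hidx : i + (j - 2) = m - 2 := by omega
      rwa [hidx] at this
  -- commutation relation
  have hrelT : ∀ (m : ℤ), ∀ x ∈ G m, E (F x) - F (E x) = (m : ℝ) • x := by
    intro m x hx
    have hker : G m ≤ LinearMap.ker ((E ∘ₗ F - F ∘ₗ E) - (m : ℝ) • LinearMap.id) := by
      refine hle m _ ?_
      intro i j w h hij hw hh
      rw [LinearMap.mem_ker]
      have e1 : L (fW w) = fW (L w) + (i : ℝ) • w := by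
        linear_combination (norm := module) hfWrel i w hw
      have e2 : l (fH h) = fH (l h) + (j : ℝ) • h := by
        linear_combination (norm := module) hfHrel j h hh
      have hm : (m : ℝ) = (i : ℝ) + (j : ℝ) := by
        have : ((i + j : ℤ) : ℝ) = (m : ℝ) := by rw [hij]
        push_cast at this
        linarith
      simp only [LinearMap.sub_apply, LinearMap.comp_apply, LinearMap.smul_apply,
        LinearMap.id_apply, hE, hF, LinearMap.add_apply, LinearMap.rTensor_tmul,
        LinearMap.lTensor_tmul, map_add]
      rw [e1, e2, hm]
      simp only [add_tmul, tmul_add, smul_tmul', tmul_smul]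
      simp only [add_smul, add_tmul]
      abel
    have := hker hx
    rw [LinearMap.mem_ker] at this
    have h2 : E (F x) - F (E x) - (m : ℝ) • x = 0 := by
      simpa [LinearMap.sub_apply, LinearMap.comp_apply] using this
    linear_combination (norm := module) h2
  -- vanishing bound
  obtain ⟨NW, hNW⟩ := grade_bound gW hWint
  obtain ⟨NH, hNH⟩ := grade_bound gH hHint
  have hGbot : ∀ m : ℤ, (NW + NH : ℕ) < m.natAbs → G m = ⊥ := by
    intro m hm
    rw [eq_bot_iff]
    refine hle m ⊥ ?_
    intro i j w h hij hw hh
    have : NW < i.natAbs ∨ NH < j.natAbs := by omega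
    rcases this with hi | hj
    · rw [hNW i hi] at hw
      rw [Submodule.mem_bot] at hw
      rw [hw, TensorProduct.zero_tmul]
      exact Submodule.zero_mem ⊥
    · rw [hNH j hj] at hh
      rw [Submodule.mem_bot] at hh
      rw [hh, TensorProduct.tmul_zero]
      exact Submodule.zero_mem ⊥
  -- injectivity both ways via lemB
  have hinj : ∀ p : ℕ, 0 < p → ∀ x ∈ G (-(p : ℤ)), (E ^ p) x = 0 → x = 0 :=
    lemB G E F hEdeg hFdeg hrelT (NW + NH + 1) (by
      intro m hm
      apply hGbot
      omega)
  have hinjneg : ∀ p : ℕ, 0 < p → ∀ x ∈ G (p : ℤ), (F ^ p) x = 0 → x = 0 := by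
    have := lemB (fun m => G (-m)) F E
      (by
        intro m x hx
        have := hFdeg (-m) x hx
        have hidx : -m - 2 = -(m + 2) := by ring
        rwa [hidx] at this)
      (by
        intro m x hx
        have := hEdeg (-m) x hx
        have hidx : -m + 2 = -(m - 2) := by ring
        rwa [hidx] at this)
      (by
        intro m x hx
        have h1 := hrelT (-m) x hx
        have hc : ((-m : ℤ) : ℝ) = -(m : ℝ) := by push_cast; ring
        rw [hc] at h1
        linear_combination (norm := module) -h1)
      (NW + NH + 1)
      (by
        intro m hm
        apply hGbot
        omega)
    intro p hp x hx hx0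
    refine this p hp x ?_ hx0
    show x ∈ G (-(-(p : ℤ)))
    rwa [neg_neg]
  -- conclusion
  intro p hp
  have hmapE : ∀ x ∈ G (-(p : ℤ)), (E ^ p) x ∈ G (p : ℤ) := by
    intro x hx
    have := pow_deg G E hEdeg p (-(p : ℤ)) x hx
    have hidx : -(p : ℤ) + 2 * (p : ℕ) = (p : ℤ) := by push_cast; ring
    rwa [hidx] at this
  refine ⟨hmapE, ?_⟩
  intro hmap
  have hEinj : Function.Injective ((E ^ p).restrict hmap) := by
    intro a b hab
    apply Subtype.ext
    have hv := congrArg Subtype.val hab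
    simp only [LinearMap.restrict_apply] at hv
    have h0 : (E ^ p) ((a : W ⊗[ℝ] H) - b) = 0 := by
      rw [map_sub, hv, sub_self]
    have := hinj p hp ((a : W ⊗[ℝ] H) - b) (Submodule.sub_mem _ a.2 b.2) h0
    exact sub_eq_zero.mp this
  refine ⟨hEinj, ?_⟩
  have hmapF : ∀ x ∈ G (p : ℤ), (F ^ p) x ∈ G (-(p : ℤ)) := by
    intro x hx
    have := pow_deg_neg G F hFdeg p (p : ℤ) x hx
    have hidx : (p : ℤ) - 2 * (p : ℕ) = -(p : ℤ) := by push_cast; ring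
    rwa [hidx] at this
  have hFinj : Function.Injective ((F ^ p).restrict hmapF) := by
    intro a b hab
    apply Subtype.ext
    have hv := congrArg Subtype.val hab
    simp only [LinearMap.restrict_apply] at hv
    have h0 : (F ^ p) ((a : W ⊗[ℝ] H) - b) = 0 := by
      rw [map_sub, hv, sub_self]
    have := hinjneg p hp ((a : W ⊗[ℝ] H) - b) (Submodule.sub_mem _ a.2 b.2) h0
    exact sub_eq_zero.mp this
  have hfr1 : Module.finrank ℝ (G (-(p : ℤ))) ≤ Module.finrank ℝ (G (p : ℤ)) :=
    LinearMap.finrank_le_finrank_of_injective hEinj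
  have hfr2 : Module.finrank ℝ (G (p : ℤ)) ≤ Module.finrank ℝ (G (-(p : ℤ))) :=
    LinearMap.finrank_le_finrank_of_injective hFinj
  exact (LinearMap.injective_iff_surjective_of_finrank_eq_finrank
    (le_antisymm hfr1 hfr2)).mp hEinj
end

section
/- Let H be a finite-dimensional graded real vector space and l a degree-2 operator defining a Lefschetz operation on H (centered at 0). Then l also defines a Lefschetz operation on the image l·H shifted by one degree: for every i > 1, the map l^{i-1} : l·H^{-i} → l·H^{i-2} is an isomorphism. -/
/-!
STATEMENT 6: If `l` defines a Lefschetz operation on a finite-dimensional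
graded real vector space `H`, then `l` also defines a Lefschetz operation on
the image `l·H` shifted by one degree: for every `i > 1`, the map
`l^{i-1} : l·H^{-i} → l·H^{i-2}` (where `l·H^{-i} = l(H^{-i}) ⊆ H^{-i+2}`)
is an isomorphism.
-/

open Module

theorem stmt6 {H : Type} [AddCommGroup H] [Module ℝ H] [FiniteDimensional ℝ H]
    (g : ℤ → Submodule ℝ H) (hint : DirectSum.IsInternal g)
    (l : Module.End ℝ H) (hdeg : IsDeg2 g l) (hlef : IsLefschetz g l) :
    ∀ i : ℕ, 1 < i →
      (∀ x ∈ (g (-(i : ℤ))).map (l : H →ₗ[ℝ] H),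
        (l ^ (i - 1)) x ∈ (g ((i : ℤ) - 2)).map (l : H →ₗ[ℝ] H)) ∧
      ∀ hmap : ∀ x ∈ (g (-(i : ℤ))).map (l : H →ₗ[ℝ] H),
          (l ^ (i - 1)) x ∈ (g ((i : ℤ) - 2)).map (l : H →ₗ[ℝ] H),
        Function.Bijective ((l ^ (i - 1)).restrict hmap) := by

  intro i hi
  have hi1 : 1 ≤ i := le_of_lt hi
  obtain ⟨hmem0, hbij0⟩ := hlef i (by omega)
  have hbij := hbij0 hmem0
  have key : ∀ y : H, (l ^ (i - 1)) (l y) = (l ^ i) y := by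
    intro y
    have h : l ^ i = l ^ (i - 1) * l := by
      rw [← pow_succ]; congr 1; omega
    rw [h]; rfl
  have key2 : ∀ y : H, l ((l ^ (i - 1)) y) = (l ^ i) y := by
    intro y
    have h : l ^ i = l * l ^ (i - 1) := by
      rw [← pow_succ']; congr 1; omega
    rw [h]; rfl
  have hdegpow : ∀ (n : ℕ) (j : ℤ) (x : H), x ∈ g j → (l ^ n) x ∈ g (j + 2 * n) := by
    intro n
    induction n with
    | zero => simpa using fun j x h => h
    | succ n ih =>
      intro j x hx
      have h2 := hdeg (j + 2 * n) _ (ih j x hx)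
      have hp : l ^ (n + 1) = l * l ^ n := by rw [← pow_succ']
      rw [hp]
      have hcast : (j : ℤ) + 2 * ((n : ℤ) + 1) = j + 2 * n + 2 := by ring
      push_cast
      rw [hcast]
      exact h2
  have hmidmem : ∀ y : H, y ∈ g (-(i : ℤ)) → (l ^ (i - 1)) y ∈ g ((i : ℤ) - 2) := by
    intro y hy
    have := hdegpow (i - 1) (-(i : ℤ)) y hy
    have hcast : (-(i : ℤ) + 2 * ((i - 1 : ℕ) : ℤ)) = (i : ℤ) - 2 := by
      have : ((i - 1 : ℕ) : ℤ) = (i : ℤ) - 1 := by omega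
      rw [this]; ring
    rwa [hcast] at this
  refine ⟨?_, ?_⟩
  · rintro x ⟨y, hy, rfl⟩
    exact ⟨(l ^ (i - 1)) y, hmidmem y hy, by rw [key2, key]⟩
  · intro hmap
    constructor
    · rintro ⟨x, hx⟩ ⟨x', hx'⟩ h
      obtain ⟨y, hy, rfl⟩ := hx
      obtain ⟨y', hy', rfl⟩ := hx'
      have hval : (l ^ (i - 1)) (l y) = (l ^ (i - 1)) (l y') :=
        congrArg Subtype.val h
      rw [key, key] at hval
      have : (⟨y, hy⟩ : g (-(i : ℤ))) = ⟨y', hy'⟩ :=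
        hbij.injective (Subtype.ext hval)
      have hyy : y = y' := congrArg Subtype.val this
      exact Subtype.ext (by simp [hyy])
    · rintro ⟨z, hz⟩
      obtain ⟨w, hw, rfl⟩ := hz
      have hlw : l w ∈ g (i : ℤ) := by
        have := hdeg ((i : ℤ) - 2) w hw
        rwa [show (i : ℤ) - 2 + 2 = (i : ℤ) by ring] at this
      obtain ⟨⟨y, hy⟩, heq⟩ := hbij.surjective ⟨l w, hlw⟩
      have hval : (l ^ i) y = l w := congrArg Subtype.val heq
      refine ⟨⟨l y, ⟨y, hy, rfl⟩⟩, Subtype.ext ?_⟩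
      show (l ^ (i - 1)) (l y) = l w
      rw [key, hval]
end

section
/- Let Σ be a fan and F a sheaf on the finite topological space Σ (open sets = subfans) given by stalks F_σ and compatible restriction maps res^σ_τ for τ ≤ σ. Then the sheaf F is flabby (every restriction of sections F(Σ) → F(S) to a subfan S is surjective) if and only if for every cone σ ∈ Σ the restriction map F([σ]) → F(∂σ) is surjective. -/
/-!
STATEMENT 11: A sheaf on a fan (a finite poset of cones with the topology whose
open sets are the subfans), given by stalks `F_σ` and compatible restriction
maps, is flabby (every restriction `F(Σ) → F(S)` to a subfan is surjective) if
and only if for every cone `σ` the restriction `F([σ]) → F(∂σ)` is surjective.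
-/

/-- A subfan: a downward closed set of cones (= open set). -/
def IsSubfan {C : Type} [PartialOrder C] (S : Set C) : Prop :=
  ∀ ⦃σ τ : C⦄, τ ≤ σ → σ ∈ S → τ ∈ S

/-- Sections of the stalk-data sheaf over a set of cones. -/
def Sect {C : Type} [PartialOrder C] (F : C → Type)
    [∀ σ, AddCommGroup (F σ)] [∀ σ, Module ℝ (F σ)]
    (res : ∀ ⦃σ τ : C⦄, τ ≤ σ → F σ →ₗ[ℝ] F τ) (S : Set C) : Type :=
  { f : ∀ σ : S, F σ // ∀ (σ τ : S) (h : τ.1 ≤ σ.1), res h (f σ) = f τ }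

/-- Restriction of sections to a smaller set of cones. -/
def restrictSect {C : Type} [PartialOrder C] (F : C → Type)
    [∀ σ, AddCommGroup (F σ)] [∀ σ, Module ℝ (F σ)]
    (res : ∀ ⦃σ τ : C⦄, τ ≤ σ → F σ →ₗ[ℝ] F τ)
    {S S' : Set C} (hsub : S' ⊆ S) (f : Sect F res S) : Sect F res S' :=
  ⟨fun σ => f.1 ⟨σ.1, hsub σ.2⟩,
   fun σ τ h => f.2 ⟨σ.1, hsub σ.2⟩ ⟨τ.1, hsub τ.2⟩ h⟩

section Aux
open Classical
variable {C : Type} [Fintype C] [PartialOrder C]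
    (F : C → Type) [∀ σ, AddCommGroup (F σ)] [∀ σ, Module ℝ (F σ)]
    (res : ∀ ⦃σ τ : C⦄, τ ≤ σ → F σ →ₗ[ℝ] F τ)

lemma extend_step
    (hloc : ∀ σ : C, Function.Surjective
      (restrictSect F res (fun τ (hτ : τ ∈ {τ | τ < σ}) => le_of_lt hτ)))
    {S : Set C} (hS : IsSubfan S) {σ : C} (hσ : σ ∉ S)
    (hmin : ∀ τ, τ ∉ S → ¬ τ < σ)
    (t : Sect F res S) :
    ∃ t' : Sect F res (S ∪ {σ}),
      restrictSect F res Set.subset_union_left t' = t := by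
  classical
  have sub : {τ | τ < σ} ⊆ S := fun τ hτ => by
    by_contra hc; exact hmin τ hc hτ
  obtain ⟨g, hg⟩ := hloc σ (restrictSect F res sub t)
  refine ⟨⟨fun ρ => if h : ρ.1 ∈ S then t.1 ⟨ρ.1, h⟩
      else g.1 ⟨ρ.1, le_of_eq (ρ.2.resolve_left h)⟩, ?_⟩, ?_⟩
  · intro ρ τ h
    by_cases hρ : ρ.1 ∈ S
    · have hτS : τ.1 ∈ S := hS h hρ
      simp only [dif_pos hρ, dif_pos hτS]
      exact t.2 ⟨ρ.1, hρ⟩ ⟨τ.1, hτS⟩ h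
    · have hρσ : ρ.1 = σ := ρ.2.resolve_left hρ
      by_cases hτ : τ.1 ∈ S
      · simp only [dif_neg hρ, dif_pos hτ]
        have hlt : τ.1 < σ := lt_of_le_of_ne (le_of_le_of_eq h hρσ)
          (fun heq => hσ (heq ▸ hτ))
        have h1 := g.2 ⟨ρ.1, le_of_eq hρσ⟩ ⟨τ.1, le_of_lt hlt⟩ h
        have h2 := congrFun (congrArg Subtype.val hg) ⟨τ.1, hlt⟩
        exact h1.trans h2
      · simp only [dif_neg hρ, dif_neg hτ]
        exact g.2 ⟨ρ.1, le_of_eq hρσ⟩ ⟨τ.1, le_of_eq (τ.2.resolve_left hτ)⟩ h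
  · apply Subtype.ext; funext ρ
    show (if h : ρ.1 ∈ S then t.1 ⟨ρ.1, h⟩ else _) = t.1 ρ
    rw [dif_pos ρ.2]

lemma extend_all
    (hloc : ∀ σ : C, Function.Surjective
      (restrictSect F res (fun τ (hτ : τ ∈ {τ | τ < σ}) => le_of_lt hτ))) :
    ∀ n (S : Set C), IsSubfan S → Sᶜ.ncard ≤ n →
      Function.Surjective (restrictSect F res (Set.subset_univ S)) := by
  classical
  intro n
  induction n with
  | zero =>
    intro S hS hcard t
    have hcompl : Sᶜ = ∅ := (Set.ncard_eq_zero (Set.toFinite _)).mp (Nat.le_zero.mp hcard)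
    have hall : ∀ ρ : C, ρ ∈ S := fun ρ => by
      by_contra hc; exact absurd (hcompl ▸ hc : ρ ∈ (∅ : Set C)) (Set.notMem_empty ρ)
    refine ⟨⟨fun ρ => t.1 ⟨ρ.1, hall ρ.1⟩, fun ρ τ h => t.2 ⟨ρ.1, _⟩ ⟨τ.1, _⟩ h⟩, rfl⟩
  | succ n ih =>
    intro S hS hcard t
    by_cases huniv : Sᶜ = ∅
    · have hall : ∀ ρ : C, ρ ∈ S := fun ρ => by
        by_contra hc; exact absurd (huniv ▸ hc : ρ ∈ (∅ : Set C)) (Set.notMem_empty ρ)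
      exact ⟨⟨fun ρ => t.1 ⟨ρ.1, hall ρ.1⟩, fun ρ τ h => t.2 ⟨ρ.1, _⟩ ⟨τ.1, _⟩ h⟩, rfl⟩
    · have hne : (Sᶜ.toFinset).Nonempty := by
        rw [Set.toFinset_nonempty]; exact Set.nonempty_iff_ne_empty.mpr huniv
      obtain ⟨σ, hσmem, hσmin⟩ := Finset.exists_minimal hne
      rw [Set.mem_toFinset] at hσmem
      have hmin : ∀ τ, τ ∉ S → ¬ τ < σ := fun τ hτ hlt =>
        not_lt_of_ge (hσmin (Set.mem_toFinset.mpr hτ) hlt.le) hlt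
      obtain ⟨t', ht'⟩ := extend_step F res hloc hS hσmem hmin t
      have hS' : IsSubfan (S ∪ {σ}) := by
        intro a b hle ha
        rcases ha with ha | ha
        · exact Or.inl (hS hle ha)
        · rcases eq_or_lt_of_le (le_of_le_of_eq hle ha) with h | h
          · exact Or.inr h
          · exact Or.inl (by by_contra hc; exact hmin b hc h)
      have hcard' : (S ∪ {σ})ᶜ.ncard ≤ n := by
        have h1 : (S ∪ {σ})ᶜ = Sᶜ \ {σ} := by
          ext x; simp [and_comm]
        have h2 : (Sᶜ \ {σ}).ncard < Sᶜ.ncard :=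
          Set.ncard_diff_singleton_lt_of_mem hσmem (Set.toFinite _)
        rw [h1]; omega
      obtain ⟨f, hf⟩ := ih (S ∪ {σ}) hS' hcard' t'
      refine ⟨f, ?_⟩
      apply Subtype.ext; funext ρ
      have h1 := congrFun (congrArg Subtype.val hf) ⟨ρ.1, Or.inl ρ.2⟩
      have h2 := congrFun (congrArg Subtype.val ht') ρ
      exact h1.trans h2

end Aux

theorem stmt11 {C : Type} [Fintype C] [PartialOrder C]
    (F : C → Type) [∀ σ, AddCommGroup (F σ)] [∀ σ, Module ℝ (F σ)]
    (res : ∀ ⦃σ τ : C⦄, τ ≤ σ → F σ →ₗ[ℝ] F τ)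
    (hres_refl : ∀ σ : C, res (le_refl σ) = LinearMap.id)
    (hres_trans : ∀ (ρ τ σ : C) (h1 : ρ ≤ τ) (h2 : τ ≤ σ),
      (res h1).comp (res h2) = res (h1.trans h2)) :
    -- flabby
    (∀ S : Set C, IsSubfan S →
      Function.Surjective (restrictSect F res (Set.subset_univ S))) ↔
    -- local condition `F([σ]) ↠ F(∂σ)`
    (∀ σ : C, Function.Surjective
      (restrictSect F res (fun τ (hτ : τ ∈ {τ | τ < σ}) => le_of_lt hτ))) := by
  constructor
  · intro hfl σ t
    have hsub : IsSubfan {τ | τ < σ} := fun a b hle ha => lt_of_le_of_lt hle ha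
    obtain ⟨f, hf⟩ := hfl {τ | τ < σ} hsub t
    refine ⟨restrictSect F res (Set.subset_univ _) f, ?_⟩
    apply Subtype.ext; funext ρ
    exact congrFun (congrArg Subtype.val hf) ρ
  · intro hloc S hS
    exact extend_all F res hloc Sᶜ.ncard S hS le_rfl
end
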